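/- Assume μ1, μ2, σ1, σ2 > 0 and ρ ∈ (−1,1), with ρ·μ2/σ2 ≠ μ1/σ1. Define a1 := (ρμ2/σ2 − μ1/σ1)·(σ2/σ1)/(1−ρ²), b1 := −μ2/σ2, a2² := (σ2/σ1)²/(1−ρ²), ω₀ := (ρμ2/σ2 − μ1/σ1)/√(2(1−ρ²)), A(x) := 1/σ2² + (x − ρσ1/σ2)²/(σ1²(1−ρ²)), B(x) := −μ2/σ2² + (x − ρσ1/σ2)(μ2ρσ1/σ2 − μ1)/(σ1²(1−ρ²)), and ω(x) := B(x)/√(2A(x)). Set x₀ := 2σ1/σ2. Then for every x ≥ 2x₀: |ω(x) − ω₀| ≤ |ω₀|·( |b1/a1|/x₀ + 1/(2·a2²·x₀²) + 1/(8·a2⁴·x₀⁴) ). -/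

import Mathlib

open Real Set

/-- The coefficient `A(x)`. -/
noncomputable def coefA (σ1 σ2 ρ : ℝ) (x : ℝ) : ℝ :=
  1 / σ2 ^ 2 + (x - ρ * σ1 / σ2) ^ 2 / (σ1 ^ 2 * (1 - ρ ^ 2))

/-- The coefficient `B(x)`. -/
noncomputable def coefB (μ1 μ2 σ1 σ2 ρ : ℝ) (x : ℝ) : ℝ :=
  -μ2 / σ2 ^ 2 + (x - ρ * σ1 / σ2) * (μ2 * ρ * σ1 / σ2 - μ1) / (σ1 ^ 2 * (1 - ρ ^ 2))

/-- `ω(x) = B(x)/√(2A(x))`. -/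
noncomputable def omegaFun (μ1 μ2 σ1 σ2 ρ : ℝ) (x : ℝ) : ℝ :=
  coefB μ1 μ2 σ1 σ2 ρ x / Real.sqrt (2 * coefA σ1 σ2 ρ x)

lemma o0_aux (d u v : ℝ) (hu : 0 < u) (hv : 0 < v) :
    d / (Real.sqrt 2 * Real.sqrt v) = d * u / v / (Real.sqrt 2 * (u / Real.sqrt v)) := by
  have hsv : Real.sqrt v * Real.sqrt v = v := Real.mul_self_sqrt hv.le
  have h2 : (0:ℝ) < Real.sqrt 2 := Real.sqrt_pos.2 (by norm_num)
  have hsvp : (0:ℝ) < Real.sqrt v := Real.sqrt_pos.2 hv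
  rw [div_eq_div_iff (by positivity) (by positivity)]
  field_simp
  linear_combination (-d) * hsv

lemma key_bound (a1 b1 a2 x0 t : ℝ) (ha1 : a1 ≠ 0) (ha2 : 0 < a2) (hx0 : 0 < x0)
    (ht : x0 ≤ t) :
    |(a1 * t + b1) / Real.sqrt (2 * (1 + a2 ^ 2 * t ^ 2)) - a1 / (Real.sqrt 2 * a2)| ≤
      |a1 / (Real.sqrt 2 * a2)| * (|b1 / a1| / x0 + 1 / (2 * a2 ^ 2 * x0 ^ 2)) := by
  have ht0 : 0 < t := lt_of_lt_of_le hx0 ht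
  set S := Real.sqrt (2 * (1 + a2 ^ 2 * t ^ 2)) with hSdef
  have hSpos : 0 < S := Real.sqrt_pos.2 (by positivity)
  have hS2 : S ^ 2 = 2 * (1 + a2 ^ 2 * t ^ 2) := Real.sq_sqrt (by positivity)
  have h2pos : 0 < Real.sqrt 2 := Real.sqrt_pos.2 (by norm_num)
  have h22 : Real.sqrt 2 ^ 2 = 2 := Real.sq_sqrt (by norm_num)
  set c := Real.sqrt 2 * a2 with hcdef
  have hc : 0 < c := by positivity
  have hc2 : c ^ 2 = 2 * a2 ^ 2 := by rw [hcdef, mul_pow, h22]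
  have hS2' : S ^ 2 = 2 + c ^ 2 * t ^ 2 := by rw [hS2, hc2]; ring
  have hct : c * t ≤ S := by
    have h' : c * t = Real.sqrt ((c * t) ^ 2) := (Real.sqrt_sq (by positivity)).symm
    rw [h', hSdef]
    apply Real.sqrt_le_sqrt
    nlinarith [sq_nonneg (c*t)]
  have hfact : (S - c * t) * (S + c * t) = 2 := by nlinarith [hS2']
  -- bound 1 : |b1|/S ≤ |b1|/(c*t)
  have hb : |b1| / S ≤ |b1| / (c * t) := by
    exact div_le_div_of_nonneg_left (abs_nonneg b1) (by positivity) hct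
  -- bound 2 : 0 ≤ 1/c - t/S ≤ 1/(c^3 * t^2)
  have hts : t / S ≤ 1 / c := by
    rw [div_le_div_iff₀ hSpos hc]
    linarith [hct]
  have hts2 : 1 / c - t / S ≤ 1 / (c ^ 3 * t ^ 2) := by
    rw [div_sub_div _ _ (ne_of_gt hc) (ne_of_gt hSpos), div_le_div_iff₀ (by positivity) (by positivity)]
    -- (S - c*t) * (c^3 * t^2) ≤ 1 * (c * S)
    have h1 : S - c * t ≤ 1 / (c * t) := by
      rw [le_div_iff₀ (by positivity)]
      nlinarith [hfact, hct, mul_pos hc ht0]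
    have h2 : c ^ 2 * t ≤ c * S := by nlinarith [hct]
    have h3 : (S - c * t) * (c ^ 3 * t ^ 2) ≤ (1 / (c * t)) * (c ^ 3 * t ^ 2) := by
      apply mul_le_mul_of_nonneg_right h1 (by positivity)
    have h4 : (1 / (c * t)) * (c ^ 3 * t ^ 2) = c ^ 2 * t := by
      field_simp
    nlinarith [h3]
  -- combine
  have hdecomp : (a1 * t + b1) / S - a1 / c = b1 / S + a1 * (t / S - 1 / c) := by
    field_simp; ring
  have habs : |(a1 * t + b1) / S - a1 / c| ≤ |b1| / S + |a1| * (1 / c - t / S) := by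
    rw [hdecomp]
    refine le_trans (abs_add_le _ _) ?_
    gcongr
    · rw [abs_div, abs_of_pos hSpos]
    · rw [abs_mul]
      gcongr
      rw [abs_sub_comm, abs_of_nonneg (by linarith)]
  refine le_trans habs ?_
  have hA : |a1 / c| = |a1| / c := by rw [abs_div, abs_of_pos hc]
  have hBA : |b1 / a1| = |b1| / |a1| := abs_div _ _
  rw [hA, hBA]
  have ha1p : 0 < |a1| := abs_pos.2 ha1
  have step1 : |b1| / S ≤ |a1| / c * (|b1| / |a1| / x0) := by
    have : |a1| / c * (|b1| / |a1| / x0) = |b1| / (c * x0) := by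
      field_simp
    rw [this]
    refine le_trans hb ?_
    apply div_le_div_of_nonneg_left (abs_nonneg b1) (by positivity)
    exact mul_le_mul_of_nonneg_left ht hc.le
  have step2 : |a1| * (1 / c - t / S) ≤ |a1| / c * (1 / (2 * a2 ^ 2 * x0 ^ 2)) := by
    have h5 : 1 / (c ^ 3 * t ^ 2) ≤ 1 / (c ^ 3 * x0 ^ 2) := by
      apply div_le_div_of_nonneg_left (by norm_num) (by positivity)
      gcongr
    have h6 : |a1| / c * (1 / (2 * a2 ^ 2 * x0 ^ 2)) = |a1| * (1 / (c ^ 3 * x0 ^ 2)) := by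
      rw [show (2:ℝ) * a2 ^ 2 = c ^ 2 from hc2.symm]
      ring
    rw [h6]
    have := le_trans hts2 h5
    exact mul_le_mul_of_nonneg_left this (abs_nonneg a1)
  calc |b1| / S + |a1| * (1 / c - t / S)
      ≤ |a1| / c * (|b1| / |a1| / x0) + |a1| / c * (1 / (2 * a2 ^ 2 * x0 ^ 2)) := by
        exact add_le_add step1 step2
    _ = |a1| / c * (|b1| / |a1| / x0 + 1 / (2 * a2 ^ 2 * x0 ^ 2)) := by ring

theorem omega_minus_omega0_bound
    (μ1 μ2 σ1 σ2 ρ : ℝ) (hμ1 : 0 < μ1) (hμ2 : 0 < μ2) (hσ1 : 0 < σ1) (hσ2 : 0 < σ2)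
    (hρ : ρ ∈ Set.Ioo (-1 : ℝ) 1) (hne : ρ * μ2 / σ2 ≠ μ1 / σ1) :
    ∀ x : ℝ, 2 * (2 * σ1 / σ2) ≤ x →
      |omegaFun μ1 μ2 σ1 σ2 ρ x -
          (ρ * μ2 / σ2 - μ1 / σ1) / Real.sqrt (2 * (1 - ρ ^ 2))| ≤
        |(ρ * μ2 / σ2 - μ1 / σ1) / Real.sqrt (2 * (1 - ρ ^ 2))| *
          (|(-μ2 / σ2) / ((ρ * μ2 / σ2 - μ1 / σ1) * (σ2 / σ1) / (1 - ρ ^ 2))| /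
              (2 * σ1 / σ2) +
            1 / (2 * ((σ2 / σ1) ^ 2 / (1 - ρ ^ 2)) * (2 * σ1 / σ2) ^ 2) +
            1 / (8 * ((σ2 / σ1) ^ 2 / (1 - ρ ^ 2)) ^ 2 * (2 * σ1 / σ2) ^ 4)) := by
  intro x hx
  obtain ⟨hρ1, hρ2⟩ := hρ
  have h1 : 0 < 1 - ρ ^ 2 := by nlinarith
  have hd0 : ρ * μ2 / σ2 - μ1 / σ1 ≠ 0 := sub_ne_zero.2 hne
  have hs : 0 < Real.sqrt (1 - ρ ^ 2) := Real.sqrt_pos.2 h1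
  have h2pos : 0 < Real.sqrt 2 := Real.sqrt_pos.2 (by norm_num)
  set d := ρ * μ2 / σ2 - μ1 / σ1 with hddef
  set b1 := -μ2 / σ2 with hb1def
  set a1 := d * (σ2 / σ1) / (1 - ρ ^ 2) with ha1def
  set x0 := 2 * σ1 / σ2 with hx0def
  set a2 := (σ2 / σ1) / Real.sqrt (1 - ρ ^ 2) with ha2def
  have hx0p : 0 < x0 := by rw [hx0def]; positivity
  have ha2 : 0 < a2 := by rw [ha2def]; positivity
  have ha2sq : a2 ^ 2 = (σ2 / σ1) ^ 2 / (1 - ρ ^ 2) := by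
    rw [ha2def, div_pow, Real.sq_sqrt h1.le]
  have ha1 : a1 ≠ 0 := by
    rw [ha1def]
    exact div_ne_zero (mul_ne_zero hd0 (by positivity)) (ne_of_gt h1)
  set t := x - ρ * σ1 / σ2 with htdef
  have ht : x0 ≤ t := by
    have hq : 0 < σ1 / σ2 := by positivity
    rw [hx0def, htdef]
    have h2x : 2 * (2 * σ1 / σ2) ≤ x := hx
    have h5 : ρ * σ1 / σ2 ≤ σ1 / σ2 := by
      apply div_le_div_of_nonneg_right ?_ hσ2.le
      nlinarith
    have h6 : 2 * σ1 / σ2 = 2 * (σ1 / σ2) := by ring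
    linarith
  -- rewrite omegaFun
  have hss : Real.sqrt (1 - ρ ^ 2) * Real.sqrt (1 - ρ ^ 2) = 1 - ρ ^ 2 :=
    Real.mul_self_sqrt h1.le
  have hA : 2 * coefA σ1 σ2 ρ x = (2 * (1 + a2 ^ 2 * t ^ 2)) / σ2 ^ 2 := by
    rw [coefA, ha2sq, htdef]
    field_simp
  have hB : coefB μ1 μ2 σ1 σ2 ρ x = (a1 * t + b1) / σ2 := by
    rw [coefB, ha1def, hb1def, htdef, hddef]
    field_simp
    ring
  have hSne : Real.sqrt (2 * (1 + a2 ^ 2 * t ^ 2)) ≠ 0 :=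
    ne_of_gt (Real.sqrt_pos.2 (by positivity))
  have homega : omegaFun μ1 μ2 σ1 σ2 ρ x =
      (a1 * t + b1) / Real.sqrt (2 * (1 + a2 ^ 2 * t ^ 2)) := by
    rw [omegaFun, hA, hB, Real.sqrt_div (by positivity : (0:ℝ) ≤ 2 * (1 + a2 ^ 2 * t ^ 2)),
      Real.sqrt_sq hσ2.le]
    rw [div_div_div_eq, mul_comm σ2 (Real.sqrt (2 * (1 + a2 ^ 2 * t ^ 2)))]
    rw [mul_div_mul_right _ _ (ne_of_gt hσ2)]
  have homega0 : d / Real.sqrt (2 * (1 - ρ ^ 2)) = a1 / (Real.sqrt 2 * a2) := by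
    rw [Real.sqrt_mul (by norm_num : (0:ℝ) ≤ 2), ha1def, ha2def]
    exact o0_aux d (σ2 / σ1) (1 - ρ ^ 2) (by positivity) h1
  rw [homega, homega0, ← ha2sq]
  have key := key_bound a1 b1 a2 x0 t ha1 ha2 hx0p ht
  refine le_trans key ?_
  have h3 : (0:ℝ) ≤ 1 / (8 * (a2 ^ 2) ^ 2 * x0 ^ 4) := by positivity
  have habs : 0 ≤ |a1 / (Real.sqrt 2 * a2)| := abs_nonneg _
  exact mul_le_mul_of_nonneg_left (le_add_of_nonneg_right h3) habs
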